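/- If s and t are two integer vectors in ℤ^{d+1}, each satisfying 0 ≤ s_i ≤ k_i, 0 ≤ t_i ≤ k_i for all i, with at least one coordinate of s equal to 0 and at least one coordinate of t equal to 0, and if t - s lies in the subgroup of ℤ^{d+1} generated by the rows of M_k and the all-ones vector, then s = t. -/

import Mathlib

/-- The matrix `M_k`: diagonal entries `k i + 1`, cyclic superdiagonal entries
`-(k (i+1))` (including the bottom-left corner entry `-k 1`), zeros elsewhere. -/
def heawoodMatrix (d : ℕ) (k : Fin (d + 1) → ℤ) :
    Matrix (Fin (d + 1)) (Fin (d + 1)) ℤ :=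
  Matrix.of fun i j => if j = i then k i + 1 else if j = i + 1 then -k (i + 1) else 0

open Fin.NatCast in
lemma cyc_const {n : ℕ} (b : Fin (n + 1) → ℤ) (j0 : Fin (n + 1))
    (h : ∀ j, b j = b j0 → b (j - 1) = b j0) : ∀ j, b j = b j0 := by
  have key : ∀ m : ℕ, b (j0 - (m : Fin (n + 1))) = b j0 := by
    intro m
    induction m with
    | zero => simp
    | succ m ih =>
      have e1 : ((m + 1 : ℕ) : Fin (n + 1)) = (m : Fin (n + 1)) + 1 := by push_cast; rfl
      have e2 : j0 - ((m : Fin (n + 1)) + 1) = (j0 - (m : Fin (n + 1))) - 1 := sub_add_eq_sub_sub _ _ _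
      rw [e1, e2]
      exact h _ ih
  intro j
  have := key (j0 - j).val
  rwa [Fin.cast_val_eq_self, sub_sub_cancel] at this

lemma sub_one_ne {d : ℕ} (hd : 1 ≤ d) (j : Fin (d + 1)) : j - 1 ≠ j := by
  intro h
  have h1 : (1 : Fin (d + 1)) = 0 := sub_eq_self.mp h
  rw [Fin.ext_iff, Fin.val_one', Fin.val_zero, Nat.mod_eq_of_lt (by omega)] at h1
  omega

lemma heawood_entry {d : ℕ} (hd : 1 ≤ d) (k : Fin (d + 1) → ℤ) (i j : Fin (d + 1)) :
    heawoodMatrix d k i j =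
      (if i = j then k j + 1 else 0) + (if i = j - 1 then -k j else 0) := by
  have hne := sub_one_ne hd j
  unfold heawoodMatrix
  simp only [Matrix.of_apply]
  by_cases h1 : i = j
  · subst h1
    have h2 : i ≠ i - 1 := fun h => hne h.symm
    simp [h2]
  · by_cases h2 : i = j - 1
    · subst h2
      have h3 : j = (j - 1) + 1 := (sub_add_cancel j 1).symm
      have h4 : ¬ j = j - 1 := fun h => hne h.symm
      have hd0 : d ≠ 0 := by omega
      simp [h4, hne, ← h3, hd0]
    · have h3 : ¬ j = i + 1 := fun h => h2 (by rw [h]; exact (add_sub_cancel_right i 1).symm)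
      have h4 : ¬ j = i := fun h => h1 h.symm
      simp [h1, h2, h3, h4]

lemma heawood_row_sum {d : ℕ} (hd : 1 ≤ d) (k : Fin (d + 1) → ℤ)
    (b : Fin (d + 1) → ℤ) (j : Fin (d + 1)) :
    ∑ i, b i * heawoodMatrix d k i j = b j * (k j + 1) - b (j - 1) * k j := by
  have key : ∀ i, b i * heawoodMatrix d k i j =
      (if i = j then b j * (k j + 1) else 0) + (if i = j - 1 then b (j - 1) * (-k j) else 0) := by
    intro i
    rw [heawood_entry hd, mul_add]
    congr 1
    · by_cases h : i = j <;> simp [h]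
    · by_cases h : i = j - 1 <;> simp [h]
  simp_rw [key]
  rw [Finset.sum_add_distrib, Finset.sum_ite_eq', Finset.sum_ite_eq']
  simp
  ring

theorem fundamental_representatives_unique (d : ℕ) (hd : 1 ≤ d)
    (k : Fin (d + 1) → ℤ) (hk : ∀ i, 0 < k i)
    (L : AddSubgroup (Fin (d + 1) → ℤ))
    (hL : L = AddSubgroup.closure
      (Set.range (fun i => heawoodMatrix d k i) ∪ {fun _ => (1 : ℤ)}))
    (s t : Fin (d + 1) → ℤ)
    (hs : ∀ i, 0 ≤ s i ∧ s i ≤ k i) (hs0 : ∃ i, s i = 0)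
    (ht : ∀ i, 0 ≤ t i ∧ t i ≤ k i) (ht0 : ∃ i, t i = 0)
    (hmem : t - s ∈ L) :
    s = t := by
  set S : Set (Fin (d + 1) → ℤ) := Set.range (fun i => heawoodMatrix d k i) with hS
  -- the all-ones vector is the sum of the rows
  have hone : (fun _ => (1 : ℤ)) = ∑ i, heawoodMatrix d k i := by
    funext j
    rw [show (∑ i, heawoodMatrix d k i) j = ∑ i, heawoodMatrix d k i j from Finset.sum_apply _ _ _]
    have := heawood_row_sum hd k (fun _ => 1) j
    simp only [one_mul] at this
    rw [this]; ring
  -- t - s lies in the integer span of the rows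
  have hspan : t - s ∈ Submodule.span ℤ S := by
    have hle : L ≤ (Submodule.span ℤ S).toAddSubgroup := by
      rw [hL]
      rw [AddSubgroup.closure_le]
      rintro x (hx | hx)
      · exact Submodule.subset_span hx
      · rw [Set.mem_singleton_iff] at hx; subst hx
        show (fun _ => (1 : ℤ)) ∈ Submodule.span ℤ S
        rw [hone]
        exact Submodule.sum_mem _ (fun i _ => Submodule.subset_span ⟨i, rfl⟩)
    exact hle hmem
  rw [hS] at hspan
  obtain ⟨b, hb⟩ := (Submodule.mem_span_range_iff_exists_fun ℤ).mp hspan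
  have hA : ∀ j, t j - s j = b j + (b j - b (j - 1)) * k j := by
    intro j
    have h := congrFun hb j
    rw [Finset.sum_apply] at h
    simp only [Pi.smul_apply, smul_eq_mul, Pi.sub_apply] at h
    have h2 := heawood_row_sum hd k b j
    have h3 : (heawoodMatrix d k · j) = fun i => heawoodMatrix d k i j := rfl
    rw [show (∑ i, b i * heawoodMatrix d k i j) = b j * (k j + 1) - b (j - 1) * k j from h2] at h
    linear_combination -h
  have hub : ∀ j, b j + (b j - b (j - 1)) * k j ≤ k j := by
    intro j
    have h1 := (ht j).2
    have h2 := (hs j).1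
    have h3 := hA j
    linarith
  have hlb : ∀ j, -k j ≤ b j + (b j - b (j - 1)) * k j := by
    intro j
    have h1 := (ht j).1
    have h2 := (hs j).2
    have h3 := hA j
    linarith
  obtain ⟨jM, -, hjM⟩ := Finset.exists_max_image Finset.univ b ⟨0, Finset.mem_univ 0⟩
  obtain ⟨jm, -, hjm⟩ := Finset.exists_min_image Finset.univ b ⟨0, Finset.mem_univ 0⟩
  have hconst : ∀ i j, b i = b j := by
    rcases lt_or_ge 0 (b jM) with hpos | hM
    · have hcl : ∀ j, b j = b jM → b (j - 1) = b jM := by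
        intro j hj
        by_contra hne
        have hlt : b (j - 1) < b jM := lt_of_le_of_ne (hjM _ (Finset.mem_univ _)) hne
        have h1 : (1 : ℤ) ≤ b j - b (j - 1) := by omega
        have hkj := hk j
        have hmul := mul_le_mul_of_nonneg_right h1 hkj.le
        have := hub j
        nlinarith
      have hc := cyc_const b jM hcl
      intro i j; rw [hc i, hc j]
    · rcases lt_or_ge (b jm) 0 with hneg | hm
      · have hcl : ∀ j, b j = b jm → b (j - 1) = b jm := by
          intro j hj
          by_contra hne
          have hlt : b jm < b (j - 1) :=
            lt_of_le_of_ne (hjm _ (Finset.mem_univ _)) (Ne.symm hne)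
          have h1 : b j - b (j - 1) ≤ -1 := by omega
          have hkj := hk j
          have hmul := mul_le_mul_of_nonneg_right h1 hkj.le
          have := hlb j
          nlinarith
        have hc := cyc_const b jm hcl
        intro i j; rw [hc i, hc j]
      · intro i j
        have h1 := hjM i (Finset.mem_univ i)
        have h2 := hjm i (Finset.mem_univ i)
        have h3 := hjM j (Finset.mem_univ j)
        have h4 := hjm j (Finset.mem_univ j)
        omega
  have hAt : ∀ j, t j - s j = b 0 := by
    intro j
    have h := hA j
    rw [hconst j 0, hconst (j - 1) 0] at h
    simpa using h
  obtain ⟨i0, hi0⟩ := hs0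
  obtain ⟨i1, hi1⟩ := ht0
  have hb1 : 0 ≤ b 0 := by
    have h1 := hAt i0
    have h2 := (ht i0).1
    omega
  have hb2 : b 0 ≤ 0 := by
    have h1 := hAt i1
    have h2 := (hs i1).1
    omega
  funext j
  have := hAt j
  omega
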